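/- Let G be a finite p-group with a decomposition G = AH where A is an abelian normal subgroup of G and H is a subgroup of G. Then the Frattini subgroup satisfies Φ(G) = A^p[A,H]Φ(H), where [A,H] is the subgroup generated by commutators [a,h] with a ∈ A, h ∈ H. -/

import Mathlib

open scoped Pointwise
open scoped commutatorElement

open Subgroup

section Aux

variable {Q : Type*} [Group Q]

/-- Commutator with a central element on the left. -/
lemma comm_central_left (c u w : Q) (hc : ∀ y, c * y = y * c) :
    ⁅c * u, w⁆ = ⁅u, w⁆ := by
  have hcinv : ∀ y : Q, c⁻¹ * y = y * c⁻¹ := by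
    intro y
    have := hc y
    calc c⁻¹ * y = c⁻¹ * (y * c) * c⁻¹ := by simp [mul_assoc]
    _ = c⁻¹ * (c * y) * c⁻¹ := by rw [← this]
    _ = y * c⁻¹ := by simp [← mul_assoc]
  calc ⁅c * u, w⁆ = c * (u * w * u⁻¹ * (c⁻¹ * w⁻¹)) := by
        simp [commutatorElement_def, mul_assoc]
    _ = c * (u * w * u⁻¹ * (w⁻¹ * c⁻¹)) := by rw [hcinv w⁻¹]
    _ = (u * w * u⁻¹ * (w⁻¹ * c⁻¹)) * c := hc _
    _ = ⁅u, w⁆ := by simp [commutatorElement_def, mul_assoc]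

lemma comm_central_right (d u v : Q) (hd : ∀ y, d * y = y * d) :
    ⁅u, d * v⁆ = ⁅u, v⁆ := by
  rw [← commutatorElement_inv, comm_central_left d v u hd, commutatorElement_inv]

/-- In a group which is abelian of exponent `p`, any nontrivial element avoids
some maximal subgroup. -/
lemma exists_coatom_not_mem (p : ℕ) [Fact p.Prime]
    (hcomm : ∀ a b : Q, a * b = b * a) (hexp : ∀ a : Q, a ^ p = 1)
    {x : Q} (hx : x ≠ 1) : ∃ M : Subgroup Q, IsCoatom M ∧ x ∉ M := by
  haveI : NeZero p := ⟨(Fact.out : p.Prime).ne_zero⟩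
  letI : CommGroup Q := { (inferInstance : Group Q) with mul_comm := hcomm }
  have hsm : ∀ a : Additive Q, p • a = 0 := fun a => by
    rw [← toMul_eq_one, toMul_nsmul]; exact hexp _
  haveI : Module (ZMod p) (Additive Q) := AddCommGroup.zmodModule hsm
  have hv : (Additive.ofMul x) ≠ (0 : Additive Q) := hx
  obtain ⟨f, hf⟩ : ∃ f : (Additive Q) →ₗ[ZMod p] (ZMod p), f (Additive.ofMul x) ≠ 0 := by
    by_contra h
    push_neg at h
    exact hv ((Module.forall_dual_apply_eq_zero_iff (ZMod p) _).mp h)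
  have hfs : Function.Surjective f := by
    intro c
    refine ⟨(c * (f (Additive.ofMul x))⁻¹) • Additive.ofMul x, ?_⟩
    rw [map_smul, smul_eq_mul, mul_assoc, inv_mul_cancel₀ hf, mul_one]
  haveI : IsSimpleModule (ZMod p) (ZMod p) :=
    isSimpleModule_self_iff_isUnit.mpr ⟨inferInstance, fun y hy => isUnit_iff_ne_zero.mpr hy⟩
  have hco : IsCoatom (LinearMap.ker f) := LinearMap.isCoatom_ker_of_surjective hfs
  refine ⟨Subgroup.toAddSubgroup.symm ((AddSubgroup.toZModSubmodule p).symm (LinearMap.ker f)),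
    ?_, ?_⟩
  · rw [OrderIso.isCoatom_iff, OrderIso.isCoatom_iff]
    exact hco
  · intro hmem
    exact hf hmem

end Aux

section Frattini

variable {G : Type*} [Group G]

lemma closure_pow_conj_mem (p : ℕ) {n : G} (hn : n ∈ Subgroup.closure {x : G | ∃ g : G, x = g ^ p})
    (g : G) : g * n * g⁻¹ ∈ Subgroup.closure {x : G | ∃ g : G, x = g ^ p} := by
  have h1 : g * n * g⁻¹ ∈ (Subgroup.closure {x : G | ∃ g : G, x = g ^ p}).map
      (MulAut.conj g).toMonoidHom := Subgroup.mem_map_of_mem _ hn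
  rw [MonoidHom.map_closure] at h1
  refine Subgroup.closure_mono ?_ h1
  rintro y ⟨z, ⟨w, rfl⟩, rfl⟩
  exact ⟨(MulAut.conj g) w, by simp⟩

instance closure_pow_normal (p : ℕ) :
    (Subgroup.closure {x : G | ∃ g : G, x = g ^ p}).Normal :=
  ⟨fun n hn g => closure_pow_conj_mem p hn g⟩

/-- For a finite `p`-group, the Frattini subgroup is `G^p ⬝ [G,G]`. -/
lemma frattini_eq_pow_sup_commutator [Finite G] {p : ℕ} [Fact p.Prime]
    (hG : IsPGroup p G) :
    frattini G = Subgroup.closure {x : G | ∃ g : G, x = g ^ p} ⊔ commutator G := by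
  set K := Subgroup.closure {x : G | ∃ g : G, x = g ^ p} ⊔ commutator G with hK
  haveI : K.Normal := Subgroup.sup_normal _ _
  apply le_antisymm
  · -- frattini G ≤ K
    intro x hx
    by_contra hxK
    have hπx : ((x : G) : G ⧸ K) ≠ 1 := by
      simpa [QuotientGroup.eq_one_iff] using hxK
    have hcomm : ∀ a b : G ⧸ K, a * b = b * a := by
      intro a b
      induction a using QuotientGroup.induction_on with
      | H a =>
      induction b using QuotientGroup.induction_on with
      | H b =>
      rw [← commutatorElement_eq_one_iff_mul_comm,
        show ((a : G ⧸ K)) = (QuotientGroup.mk' K) a from rfl,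
        show ((b : G ⧸ K)) = (QuotientGroup.mk' K) b from rfl, ← map_commutatorElement]
      exact (QuotientGroup.eq_one_iff _).mpr
        (le_sup_right (α := Subgroup G)
          (Subgroup.commutator_mem_commutator (Subgroup.mem_top a) (Subgroup.mem_top b)))
    have hexp : ∀ a : G ⧸ K, a ^ p = 1 := by
      intro a
      induction a using QuotientGroup.induction_on with
      | H a =>
      have : ((a ^ p : G) : G ⧸ K) = 1 := (QuotientGroup.eq_one_iff _).mpr
        (le_sup_left (α := Subgroup G) (Subgroup.subset_closure ⟨a, rfl⟩))
      simpa using this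
    obtain ⟨M, hM, hxM⟩ := exists_coatom_not_mem p hcomm hexp hπx
    exact hxM (frattini_le_coatom
      (Subgroup.isCoatom_comap_of_surjective (QuotientGroup.mk'_surjective K) hM) hx)
  · -- K ≤ frattini G
    have hmem : ∀ M : Subgroup G, IsCoatom M → K ≤ M := by
      intro M hM
      haveI : Group.IsNilpotent G := hG.isNilpotent
      haveI : M.Normal := Subgroup.NormalizerCondition.normal_of_coatom M
        normalizerCondition_of_isNilpotent hM
      -- the quotient is nontrivial
      obtain ⟨g₀, hg₀⟩ : ∃ g : G, g ∉ M := by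
        by_contra h
        push_neg at h
        exact hM.1 ((Subgroup.eq_top_iff' M).mpr h)
      haveI : Nontrivial (G ⧸ M) :=
        ⟨(g₀ : G ⧸ M), 1, fun h => hg₀ ((QuotientGroup.eq_one_iff _).mp h)⟩
      have hQp : IsPGroup p (G ⧸ M) := hG.to_quotient M
      -- every subgroup of the quotient is ⊥ or ⊤
      have hsub : ∀ K' : Subgroup (G ⧸ M), K' = ⊥ ∨ K' = ⊤ := by
        intro K'
        have h1 : M ≤ Subgroup.comap (QuotientGroup.mk' M) K' := by
          intro g hg
          have : ((g : G) : G ⧸ M) = 1 := (QuotientGroup.eq_one_iff g).mpr hg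
          simp only [Subgroup.mem_comap, QuotientGroup.mk'_apply, this]
          exact K'.one_mem
        rcases h1.lt_or_eq with h | h
        · right
          have h2 : Subgroup.comap (QuotientGroup.mk' M) K' = ⊤ := hM.2 _ h
          have := congrArg (Subgroup.map (QuotientGroup.mk' M)) h2
          rwa [Subgroup.map_comap_eq_self_of_surjective (QuotientGroup.mk'_surjective M),
            Subgroup.map_top_of_surjective _ (QuotientGroup.mk'_surjective M)] at this
        · left
          have := congrArg (Subgroup.map (QuotientGroup.mk' M)) h
          rw [Subgroup.map_comap_eq_self_of_surjective (QuotientGroup.mk'_surjective M)] at this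
          rw [← this, eq_bot_iff]
          rintro y ⟨g, hg, rfl⟩
          simpa [Subgroup.mem_bot] using (QuotientGroup.eq_one_iff g).mpr hg
      -- an element of order p
      have hdvd : p ∣ Nat.card (G ⧸ M) := by
        obtain ⟨n, hn⟩ := IsPGroup.iff_card.mp hQp
        rcases Nat.eq_zero_or_pos n with rfl | hpos
        · exfalso
          rw [pow_zero] at hn
          exact (Finite.one_lt_card (α := G ⧸ M)).ne' hn
        · exact hn ▸ dvd_pow_self p hpos.ne'
      obtain ⟨x, hx⟩ := exists_prime_orderOf_dvd_card' p hdvd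
      have hxne : x ≠ 1 := by
        intro h
        rw [h, orderOf_one] at hx
        exact (Fact.out : p.Prime).ne_one hx.symm
      have hzp : Subgroup.zpowers x = ⊤ := by
        refine (hsub _).resolve_left ?_
        intro h
        exact hxne (by simpa [h, Subgroup.mem_bot] using Subgroup.mem_zpowers x)
      have hcard : Nat.card (G ⧸ M) = p := by
        rw [← hx, ← Nat.card_zpowers, hzp, Subgroup.card_top]
      -- conclude
      rw [hK]
      refine sup_le ?_ ?_
      · rw [Subgroup.closure_le]
        rintro y ⟨g, rfl⟩
        have : ((g ^ p : G) : G ⧸ M) = 1 := by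
          rw [QuotientGroup.mk_pow, ← hcard]
          exact pow_card_eq_one'
        exact (QuotientGroup.eq_one_iff _).mp this
      · rw [_root_.commutator_def, Subgroup.commutator_le]
        intro g₁ _ g₂ _
        have hcomm : Commute ((g₁ : G) : G ⧸ M) ((g₂ : G) : G ⧸ M) := by
          obtain ⟨k, hk⟩ := hzp ▸ Subgroup.mem_top ((g₁ : G) : G ⧸ M)
          obtain ⟨l, hl⟩ := hzp ▸ Subgroup.mem_top ((g₂ : G) : G ⧸ M)
          rw [← hk, ← hl]
          exact Commute.zpow_zpow (Commute.refl x) k l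
        have : ((⁅g₁, g₂⁆ : G) : G ⧸ M) = 1 := by
          rw [show ((⁅g₁, g₂⁆ : G) : G ⧸ M) = (QuotientGroup.mk' M) ⁅g₁, g₂⁆ from rfl,
            map_commutatorElement]
          exact commutatorElement_eq_one_iff_commute.mpr hcomm
        exact (QuotientGroup.eq_one_iff _).mp this
    rw [frattini, Order.radical]
    exact le_iInf fun M => le_iInf fun hM => hmem M hM

end Frattini

/-- `A^p[A,H]`: the subgroup generated by `p`-th powers of elements of `A`
together with commutators `[a,h]` for `a ∈ A`, `h ∈ H`. -/
def pPowComm (p : ℕ) {G : Type} [Group G] (A H : Subgroup G) : Subgroup G :=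
  Subgroup.closure ({x | ∃ a ∈ A, x = a ^ p} ∪ {x | ∃ a ∈ A, ∃ h ∈ H, x = ⁅a, h⁆})

/-- If `G = AH` is a decomposition of a finite `p`-group with `A` abelian normal, then
`Φ(G) = A^p[A,H] · Φ(H)`. -/
theorem frattini_of_decomposition (p : ℕ) [Fact p.Prime] (G : Type) [Group G] [Finite G]
    (hG : IsPGroup p G) (A H : Subgroup G) [A.Normal] (hA : IsMulCommutative A)
    (hprod : (A : Set G) * (H : Set G) = Set.univ) :
    (frattini G : Set G) =
      (pPowComm p A H : Set G) * (((frattini ↥H).map H.subtype : Subgroup G) : Set G) := by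
  haveI := hA
  set N := pPowComm p A H with hNdef
  set Φ := (frattini ↥H).map H.subtype with hΦdef
  have hdecomp : ∀ g : G, ∃ a ∈ A, ∃ h ∈ H, a * h = g := by
    intro g
    have hg : g ∈ (A : Set G) * (H : Set G) := by rw [hprod]; trivial
    exact Set.mem_mul.mp hg
  have hNA : N ≤ A := by
    rw [hNdef, pPowComm, Subgroup.closure_le]
    rintro y (⟨a, ha, rfl⟩ | ⟨a, ha, h, hh, rfl⟩)
    · exact pow_mem ha p
    · have hy : ⁅a, h⁆ = a * (h * a⁻¹ * h⁻¹) := by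
        simp [commutatorElement_def, mul_assoc]
      rw [SetLike.mem_coe, hy]
      exact A.mul_mem ha (‹A.Normal›.conj_mem _ (A.inv_mem ha) h)
  have hconjH : ∀ n ∈ N, ∀ h ∈ H, h * n * h⁻¹ ∈ N := by
    intro n hn h hh
    have h1 : h * n * h⁻¹ ∈ N.map (MulAut.conj h).toMonoidHom :=
      Subgroup.mem_map_of_mem _ hn
    rw [hNdef, pPowComm, MonoidHom.map_closure] at h1
    refine Subgroup.closure_mono ?_ h1
    rintro y ⟨z, (⟨a, ha, rfl⟩ | ⟨a, ha, h', hh', rfl⟩), rfl⟩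
    · exact Or.inl ⟨(MulAut.conj h) a, ‹A.Normal›.conj_mem a ha h, (map_pow _ a p)⟩
    · refine Or.inr ⟨(MulAut.conj h) a, ‹A.Normal›.conj_mem a ha h, (MulAut.conj h) h', ?_, ?_⟩
      · rw [MulAut.conj_apply]
        exact H.mul_mem (H.mul_mem hh hh') (H.inv_mem hh)
      · exact map_commutatorElement _ _ _
  have hAcomm : ∀ a ∈ A, ∀ n ∈ N, a * n * a⁻¹ = n := by
    intro a ha n hn
    have hc : a * n = n * a :=
      Subgroup.mul_comm_of_mem_isMulCommutative (H := A) ha (hNA hn)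
    rw [hc, mul_assoc]
    simp
  haveI hNnorm : N.Normal := by
    constructor
    intro n hn g
    obtain ⟨a, ha, h, hh, rfl⟩ := hdecomp g
    have h1 : h * n * h⁻¹ ∈ N := hconjH n hn h hh
    have h2 : (a * h) * n * (a * h)⁻¹ = a * (h * n * h⁻¹) * a⁻¹ := by
      simp [mul_assoc]
    rw [h2, hAcomm a ha _ h1]
    exact h1
  have hAG : ∀ a ∈ A, ∀ g : G, ⁅a, g⁆ ∈ N := by
    intro a ha g
    obtain ⟨a', ha', h', hh', rfl⟩ := hdecomp g
    have hid : ⁅a, a' * h'⁆ = ⁅a, a'⁆ * (a' * ⁅a, h'⁆ * a'⁻¹) := by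
      simp only [commutatorElement_def]
      group
    rw [hid, commutatorElement_eq_one_iff_mul_comm.mpr
      (Subgroup.mul_comm_of_mem_isMulCommutative (H := A) ha ha'), one_mul]
    exact hNnorm.conj_mem _ (Subgroup.subset_closure (Or.inr ⟨a, ha, h', hh', rfl⟩)) a'
  set π := QuotientGroup.mk' N with hπdef
  have hcentral : ∀ a ∈ A, ∀ y : G ⧸ N, (π a) * y = y * (π a) := by
    intro a ha y
    induction y using QuotientGroup.induction_on with
    | H g =>
    rw [← commutatorElement_eq_one_iff_mul_comm,
      show ((g : G ⧸ N)) = π g from rfl, ← map_commutatorElement]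
    exact (QuotientGroup.eq_one_iff _).mpr (hAG a ha g)
  have hπa_pow : ∀ a ∈ A, (π a) ^ p = 1 := by
    intro a ha
    rw [← map_pow]
    exact (QuotientGroup.eq_one_iff _).mpr
      (Subgroup.subset_closure (Or.inl ⟨a, ha, rfl⟩))
  suffices hfr : frattini G = N ⊔ Φ by
    rw [hfr]
    exact Subgroup.normal_mul N Φ
  have hGfr := frattini_eq_pow_sup_commutator hG
  have hHfr := frattini_eq_pow_sup_commutator (hG.to_subgroup H)
  apply le_antisymm
  · rw [hGfr]
    refine sup_le ?_ ?_
    · rw [Subgroup.closure_le]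
      rintro y ⟨g, rfl⟩
      obtain ⟨a, ha, h, hh, rfl⟩ := hdecomp g
      have hhp : h ^ p ∈ Φ := by
        have he : h ^ p = H.subtype ((⟨h, hh⟩ : H) ^ p) := by
          rw [map_pow]; rfl
        rw [hΦdef, he]
        refine Subgroup.mem_map_of_mem _ ?_
        rw [hHfr]
        exact le_sup_left (α := Subgroup ↥H) (Subgroup.subset_closure ⟨⟨h, hh⟩, rfl⟩)
      have hq : π ((a * h) ^ p) = π (h ^ p) := by
        rw [map_pow, map_mul, map_pow]
        have hc : Commute (π a) (π h) := hcentral a ha (π h)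
        rw [hc.mul_pow, hπa_pow a ha, one_mul]
      have hmemN : (a * h) ^ p * (h ^ p)⁻¹ ∈ N := by
        refine (QuotientGroup.eq_one_iff _).mp ?_
        show π ((a * h) ^ p * (h ^ p)⁻¹) = 1
        rw [map_mul, map_inv, hq]
        simp
      have hsplit : (a * h) ^ p = ((a * h) ^ p * (h ^ p)⁻¹) * h ^ p := by group
      rw [SetLike.mem_coe, hsplit]
      exact Subgroup.mul_mem _ (le_sup_left (α := Subgroup G) hmemN)
        (le_sup_right (α := Subgroup G) hhp)
    · rw [_root_.commutator_def, Subgroup.commutator_le]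
      intro g₁ _ g₂ _
      obtain ⟨a₁, ha₁, h₁, hh₁, rfl⟩ := hdecomp g₁
      obtain ⟨a₂, ha₂, h₂, hh₂, rfl⟩ := hdecomp g₂
      have hΦmem : ⁅h₁, h₂⁆ ∈ Φ := by
        have he : ⁅h₁, h₂⁆ = H.subtype ⁅(⟨h₁, hh₁⟩ : H), (⟨h₂, hh₂⟩ : H)⁆ := by
          rw [map_commutatorElement]
          rfl
        rw [hΦdef, he]
        refine Subgroup.mem_map_of_mem _ ?_
        rw [hHfr]
        exact le_sup_right (α := Subgroup ↥H)
          (Subgroup.commutator_mem_commutator (Subgroup.mem_top _) (Subgroup.mem_top _))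
      have hq : π ⁅a₁ * h₁, a₂ * h₂⁆ = π ⁅h₁, h₂⁆ := by
        rw [map_commutatorElement, map_commutatorElement, map_mul, map_mul,
          comm_central_left _ _ _ (hcentral a₁ ha₁),
          comm_central_right _ _ _ (hcentral a₂ ha₂)]
      have hmemN : ⁅a₁ * h₁, a₂ * h₂⁆ * ⁅h₁, h₂⁆⁻¹ ∈ N := by
        refine (QuotientGroup.eq_one_iff _).mp ?_
        show π (⁅a₁ * h₁, a₂ * h₂⁆ * ⁅h₁, h₂⁆⁻¹) = 1
        rw [map_mul, map_inv, hq]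
        exact mul_inv_cancel _
      have hsplit : ⁅a₁ * h₁, a₂ * h₂⁆ = (⁅a₁ * h₁, a₂ * h₂⁆ * ⁅h₁, h₂⁆⁻¹) * ⁅h₁, h₂⁆ := by
        group
      rw [hsplit]
      exact Subgroup.mul_mem _ (le_sup_left (α := Subgroup G) hmemN)
        (le_sup_right (α := Subgroup G) hΦmem)
  · refine sup_le ?_ ?_
    · rw [hGfr, hNdef, pPowComm, Subgroup.closure_le]
      rintro y (⟨a, ha, rfl⟩ | ⟨a, ha, h, hh, rfl⟩)
      · exact le_sup_left (α := Subgroup G) (Subgroup.subset_closure ⟨a, rfl⟩)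
      · exact le_sup_right (α := Subgroup G)
          (Subgroup.commutator_mem_commutator (Subgroup.mem_top _) (Subgroup.mem_top _))
    · rw [hGfr, hΦdef, hHfr, Subgroup.map_sup]
      refine sup_le ?_ ?_
      · rw [MonoidHom.map_closure, Subgroup.closure_le]
        rintro y ⟨z, ⟨g, rfl⟩, rfl⟩
        exact le_sup_left (α := Subgroup G)
          (Subgroup.subset_closure ⟨(g : G), (map_pow H.subtype g p)⟩)
      · rw [_root_.commutator_def, Subgroup.map_commutator]
        exact le_trans (Subgroup.commutator_mono le_top le_top)
          (le_sup_right (α := Subgroup G))
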